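/- Let (Ω, ℱ, ℙ) be a probability space, T ∈ ℕ, and ℱ₀ ⊆ ℱ₁ ⊆ … ⊆ ℱ_T ⊆ ℱ a monotone family of sub-σ-algebras. For each t ∈ {0,…,T} let ℋ'_t ⊆ ℋ_t ⊆ ℱ_t be sub-σ-algebras and let λ_t and U_t be bounded random variables such that: (i) 𝔼[U_t | ℱ_t] = 0 almost surely; (ii) U_{t'} is ℱ_t-measurable for every t' < t; and (iii) 𝔼[U_t² | ℋ_t] is almost surely equal to an ℋ'_t-measurable random variable. Let Q₀ be a bounded ℱ₀-measurable random variable. Then Var(Q₀ + ∑_{t=0}^{T} 𝔼[λ_t | ℋ'_t]·U_t) ≤ Var(Q₀ + ∑_{t=0}^{T} 𝔼[λ_t | ℋ_t]·U_t). -/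

import Mathlib

open MeasureTheory Filter

/-- Variance of a real random variable: `Var(Y) = 𝔼[Y²] − (𝔼[Y])²`. -/
noncomputable def var {Ω : Type*} [MeasurableSpace Ω] (μ : Measure Ω) (Y : Ω → ℝ) : ℝ :=
  (∫ ω, (Y ω) ^ 2 ∂μ) - (∫ ω, Y ω ∂μ) ^ 2

/-- Abstract form of Theorem 4.6: the MIS estimator whose ratio conditions on a longer
history (finer σ-algebra `ℋ t`) has variance at least as large as the one conditioning on a
shorter history (coarser σ-algebra `ℋ' t ⊆ ℋ t`), when the Bellman residuals `U t` have
zero conditional mean given `ℱ t` and conditional second moments that are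
`ℋ' t`-measurable. -/
theorem stmt_7 {Ω : Type*} {m0 : MeasurableSpace Ω} (μ : Measure Ω) [IsProbabilityMeasure μ]
    (T : ℕ) (ℱ : Fin (T + 1) → MeasurableSpace Ω)
    (hmono : Monotone ℱ) (hle : ∀ t, ℱ t ≤ m0)
    (ℋ' ℋ : Fin (T + 1) → MeasurableSpace Ω)
    (hℋ'ℋ : ∀ t, ℋ' t ≤ ℋ t) (hℋℱ : ∀ t, ℋ t ≤ ℱ t)
    (lam U : Fin (T + 1) → Ω → ℝ)
    (hlammeas : ∀ t, StronglyMeasurable[m0] (lam t))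
    (hUmeas : ∀ t, StronglyMeasurable[m0] (U t))
    (Cl CU : ℝ) (hlambd : ∀ t ω, |lam t ω| ≤ Cl) (hUbd : ∀ t ω, |U t ω| ≤ CU)
    (hUcond : ∀ t, μ[U t|ℱ t] =ᵐ[μ] 0)
    (hUprev : ∀ t' t : Fin (T + 1), t' < t → StronglyMeasurable[ℱ t] (U t'))
    (hU2 : ∀ t, ∃ g : Ω → ℝ, StronglyMeasurable[ℋ' t] g ∧
      (μ[fun ω => (U t ω) ^ 2|ℋ t]) =ᵐ[μ] g)
    (Q₀ : Ω → ℝ) (hQ₀meas : StronglyMeasurable[ℱ 0] Q₀)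
    (CQ : ℝ) (hQ₀bd : ∀ ω, |Q₀ ω| ≤ CQ) :
    var μ (fun ω => Q₀ ω + ∑ t, (μ[lam t|ℋ' t]) ω * U t ω) ≤
      var μ (fun ω => Q₀ ω + ∑ t, (μ[lam t|ℋ t]) ω * U t ω) := by
  classical
  have hℋm0 : ∀ t, ℋ t ≤ m0 := fun t => (hℋℱ t).trans (hle t)
  have hℋ'm0 : ∀ t, ℋ' t ≤ m0 := fun t => (hℋ'ℋ t).trans (hℋm0 t)
  -- Ω is nonempty, hence the bounds are nonnegative
  have hΩ : Nonempty Ω := by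
    by_contra h
    rw [not_nonempty_iff] at h
    have h1 : (Set.univ : Set Ω) = ∅ := Set.univ_eq_empty_iff.mpr h
    have h2 : μ Set.univ = 1 := measure_univ
    rw [h1] at h2
    simp at h2
  obtain ⟨ω₀⟩ := hΩ
  have hCl0 : 0 ≤ Cl := (abs_nonneg _).trans (hlambd 0 ω₀)
  have hCU0 : 0 ≤ CU := (abs_nonneg _).trans (hUbd 0 ω₀)
  have hCQ0 : 0 ≤ CQ := (abs_nonneg _).trans (hQ₀bd ω₀)
  -- integrability from boundedness
  have hInt : ∀ (f : Ω → ℝ) (C : ℝ), AEStronglyMeasurable f μ →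
      (∀ᵐ ω ∂μ, |f ω| ≤ C) → Integrable f μ := fun f C hm hb =>
    ⟨hm, HasFiniteIntegral.of_bounded (C := C) (by simpa [Real.norm_eq_abs] using hb)⟩
  have hmulbd : ∀ {a b : Ω → ℝ} {Ca Cb : ℝ}, (∀ᵐ ω ∂μ, |a ω| ≤ Ca) →
      (∀ᵐ ω ∂μ, |b ω| ≤ Cb) → ∀ᵐ ω ∂μ, |a ω * b ω| ≤ Ca * Cb := by
    intro a b Ca Cb ha hb
    filter_upwards [ha, hb] with ω h1 h2
    rw [abs_mul]
    exact mul_le_mul h1 h2 (abs_nonneg _) ((abs_nonneg _).trans h1)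
  have hUint : ∀ t, Integrable (U t) μ := fun t =>
    hInt _ CU (hUmeas t).aestronglyMeasurable (Eventually.of_forall (hUbd t))
  -- a.e. bounds for conditional expectations of lam
  have hwbd : ∀ t, ∀ᵐ ω ∂μ, |(μ[lam t|ℋ t]) ω| ≤ Cl := by
    intro t
    have h := ae_bdd_condExp_of_ae_bdd (μ := μ) (m := ℋ t) (R := ⟨Cl, hCl0⟩)
      (Eventually.of_forall fun ω => by exact hlambd t ω)
    exact h
  have hw'bd : ∀ t, ∀ᵐ ω ∂μ, |(μ[lam t|ℋ' t]) ω| ≤ Cl := by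
    intro t
    have h := ae_bdd_condExp_of_ae_bdd (μ := μ) (m := ℋ' t) (R := ⟨Cl, hCl0⟩)
      (Eventually.of_forall fun ω => by exact hlambd t ω)
    exact h
  have hwm : ∀ t, StronglyMeasurable[ℋ t] (μ[lam t|ℋ t]) := fun t => stronglyMeasurable_condExp
  have hw'm : ∀ t, StronglyMeasurable[ℋ t] (μ[lam t|ℋ' t]) := fun t =>
    stronglyMeasurable_condExp.mono (hℋ'ℋ t)
  -- orthogonality: bounded ℱ t-measurable functions are orthogonal to U t
  have horth : ∀ (t : Fin (T + 1)) (Z : Ω → ℝ) (C : ℝ), StronglyMeasurable[ℱ t] Z →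
      (∀ᵐ ω ∂μ, |Z ω| ≤ C) → ∫ ω, Z ω * U t ω ∂μ = 0 := by
    intro t Z C hZm hZbd
    have hZm0 : AEStronglyMeasurable Z μ := (hZm.mono (hle t)).aestronglyMeasurable
    have hZU : Integrable (Z * U t) μ :=
      hInt (fun ω => Z ω * U t ω) (C * CU) (hZm0.mul (hUmeas t).aestronglyMeasurable)
        (hmulbd hZbd (Eventually.of_forall (hUbd t)))
    have h1 : μ[Z * U t|ℱ t] =ᵐ[μ] Z * μ[U t|ℱ t] :=
      condExp_mul_of_stronglyMeasurable_left hZm hZU (hUint t)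
    have h2 : μ[Z * U t|ℱ t] =ᵐ[μ] 0 := by
      refine h1.trans ?_
      filter_upwards [hUcond t] with ω h
      simp only [Pi.mul_apply, Pi.zero_apply, h, mul_zero]
    have h3 := integral_condExp (μ := μ) (f := Z * U t) (hle t)
    have h4 : ∫ x, (μ[Z * U t|ℱ t]) x ∂μ = 0 := by
      rw [integral_congr_ae h2]
      simp
    calc ∫ ω, Z ω * U t ω ∂μ = ∫ x, (Z * U t) x ∂μ := rfl
      _ = ∫ x, (μ[Z * U t|ℱ t]) x ∂μ := h3.symm
      _ = 0 := h4
  -- mean of the estimator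
  have hmean : ∀ (v : Fin (T + 1) → Ω → ℝ), (∀ t, StronglyMeasurable[ℋ t] (v t)) →
      (∀ t, ∀ᵐ ω ∂μ, |v t ω| ≤ Cl) →
      ∫ ω, (Q₀ ω + ∑ t, v t ω * U t ω) ∂μ = ∫ ω, Q₀ ω ∂μ := by
    intro v hvm hvbd
    have hQint : Integrable Q₀ μ :=
      hInt _ CQ ((hQ₀meas.mono (hle 0)).aestronglyMeasurable) (Eventually.of_forall hQ₀bd)
    have hfint : ∀ t, Integrable (fun ω => v t ω * U t ω) μ := fun t =>
      hInt _ (Cl * CU) ((((hvm t).mono (hℋm0 t)).mul (hUmeas t)).aestronglyMeasurable)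
        (hmulbd (hvbd t) (Eventually.of_forall (hUbd t)))
    rw [integral_add hQint (integrable_finset_sum _ fun t _ => hfint t),
      integral_finset_sum _ (fun t _ => hfint t)]
    have hz : ∀ t : Fin (T + 1), t ∈ Finset.univ → ∫ ω, v t ω * U t ω ∂μ = 0 := fun t _ =>
      horth t (v t) Cl ((hvm t).mono (hℋℱ t)) (hvbd t)
    rw [Finset.sum_congr rfl hz]
    simp
  -- second moment of the estimator
  have hsnd : ∀ (v : Fin (T + 1) → Ω → ℝ), (∀ t, StronglyMeasurable[ℋ t] (v t)) →
      (∀ t, ∀ᵐ ω ∂μ, |v t ω| ≤ Cl) →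
      ∫ ω, (Q₀ ω + ∑ t, v t ω * U t ω) ^ 2 ∂μ
        = (∫ ω, Q₀ ω ^ 2 ∂μ) + ∑ t, ∫ ω, v t ω ^ 2 * U t ω ^ 2 ∂μ := by
    intro v hvm hvbd
    have hvm0 : ∀ t, AEStronglyMeasurable (v t) μ := fun t =>
      ((hvm t).mono (hℋm0 t)).aestronglyMeasurable
    have hexp : (fun ω => (Q₀ ω + ∑ t, v t ω * U t ω) ^ 2)
        = fun ω => (Q₀ ω ^ 2 + ∑ t, 2 * Q₀ ω * (v t ω * U t ω))
            + ∑ s, ∑ t, (v s ω * U s ω) * (v t ω * U t ω) := by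
      funext ω
      rw [add_sq, pow_two (∑ t, v t ω * U t ω), Finset.sum_mul_sum, Finset.mul_sum]
    rw [hexp]
    have hQ2int : Integrable (fun ω => Q₀ ω ^ 2) μ :=
      hInt _ (CQ ^ 2) ((hQ₀meas.mono (hle 0)).aestronglyMeasurable.pow 2)
        (Eventually.of_forall fun ω => by
          rw [abs_pow]
          exact pow_le_pow_left₀ (abs_nonneg _) (hQ₀bd ω) 2)
    have hBtint : ∀ t, Integrable (fun ω => 2 * Q₀ ω * (v t ω * U t ω)) μ := fun t =>
      hInt _ (2 * CQ * (Cl * CU))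
        (((aestronglyMeasurable_const.mul (hQ₀meas.mono (hle 0)).aestronglyMeasurable).mul
          ((hvm0 t).mul (hUmeas t).aestronglyMeasurable)))
        (hmulbd (hmulbd (Eventually.of_forall fun _ => by simp)
          (Eventually.of_forall hQ₀bd)) (hmulbd (hvbd t) (Eventually.of_forall (hUbd t))))
    have hprod : ∀ s t : Fin (T + 1),
        Integrable (fun ω => (v s ω * U s ω) * (v t ω * U t ω)) μ := fun s t =>
      hInt _ ((Cl * CU) * (Cl * CU))
        (((hvm0 s).mul (hUmeas s).aestronglyMeasurable).mul
          ((hvm0 t).mul (hUmeas t).aestronglyMeasurable))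
        (hmulbd (hmulbd (hvbd s) (Eventually.of_forall (hUbd s)))
          (hmulbd (hvbd t) (Eventually.of_forall (hUbd t))))
    have hBint : Integrable (fun ω => ∑ t, 2 * Q₀ ω * (v t ω * U t ω)) μ :=
      integrable_finset_sum _ fun t _ => hBtint t
    have hCint : Integrable (fun ω => ∑ s, ∑ t, (v s ω * U s ω) * (v t ω * U t ω)) μ :=
      integrable_finset_sum _ fun s _ => integrable_finset_sum _ fun t _ => hprod s t
    have hABint : Integrable
        (fun ω => Q₀ ω ^ 2 + ∑ t, 2 * Q₀ ω * (v t ω * U t ω)) μ := hQ2int.add hBint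
    rw [integral_add hABint hCint, integral_add hQ2int hBint]
    have hBzero : ∫ ω, (∑ t, 2 * Q₀ ω * (v t ω * U t ω)) ∂μ = 0 := by
      rw [integral_finset_sum _ (fun t _ => hBtint t)]
      refine Finset.sum_eq_zero fun t _ => ?_
      have h1 : ∫ ω, 2 * Q₀ ω * (v t ω * U t ω) ∂μ = ∫ ω, (2 * Q₀ ω * v t ω) * U t ω ∂μ :=
        integral_congr_ae (Eventually.of_forall fun ω => by ring)
      rw [h1]
      exact horth t _ (2 * CQ * Cl)
        ((stronglyMeasurable_const.mul (hQ₀meas.mono (hmono (Fin.zero_le t)))).mul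
          ((hvm t).mono (hℋℱ t)))
        (hmulbd (hmulbd (Eventually.of_forall fun _ => by simp)
          (Eventually.of_forall hQ₀bd)) (hvbd t))
    have hcross : ∀ s t : Fin (T + 1), s ≠ t →
        ∫ ω, (v s ω * U s ω) * (v t ω * U t ω) ∂μ = 0 := by
      intro s t hst
      rcases lt_or_gt_of_ne hst with h | h
      · have hZ : StronglyMeasurable[ℱ t] (fun ω => v s ω * U s ω * v t ω) :=
          (((hvm s).mono ((hℋℱ s).trans (hmono h.le))).mul (hUprev s t h)).mul
            ((hvm t).mono (hℋℱ t))
        have h1 : ∫ ω, (v s ω * U s ω) * (v t ω * U t ω) ∂μ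
            = ∫ ω, (v s ω * U s ω * v t ω) * U t ω ∂μ :=
          integral_congr_ae (Eventually.of_forall fun ω => by ring)
        rw [h1]
        exact horth t _ (Cl * CU * Cl) hZ
          (hmulbd (hmulbd (hvbd s) (Eventually.of_forall (hUbd s))) (hvbd t))
      · have hZ : StronglyMeasurable[ℱ s] (fun ω => v t ω * U t ω * v s ω) :=
          (((hvm t).mono ((hℋℱ t).trans (hmono h.le))).mul (hUprev t s h)).mul
            ((hvm s).mono (hℋℱ s))
        have h1 : ∫ ω, (v s ω * U s ω) * (v t ω * U t ω) ∂μ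
            = ∫ ω, (v t ω * U t ω * v s ω) * U s ω ∂μ :=
          integral_congr_ae (Eventually.of_forall fun ω => by ring)
        rw [h1]
        exact horth s _ (Cl * CU * Cl) hZ
          (hmulbd (hmulbd (hvbd t) (Eventually.of_forall (hUbd t))) (hvbd s))
    have hCeq : ∫ ω, (∑ s, ∑ t, (v s ω * U s ω) * (v t ω * U t ω)) ∂μ
        = ∑ t, ∫ ω, v t ω ^ 2 * U t ω ^ 2 ∂μ := by
      rw [integral_finset_sum _ fun s _ => integrable_finset_sum _ fun t _ => hprod s t]
      refine Finset.sum_congr rfl fun s _ => ?_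
      rw [integral_finset_sum _ fun t _ => hprod s t]
      rw [Finset.sum_eq_single_of_mem s (Finset.mem_univ s)
        (fun t _ hts => hcross s t (Ne.symm hts))]
      exact integral_congr_ae (Eventually.of_forall fun ω => by ring)
    rw [hBzero, hCeq]
    ring
  -- termwise comparison of second moments
  have hterm : ∀ t : Fin (T + 1),
      ∫ ω, ((μ[lam t|ℋ' t]) ω) ^ 2 * U t ω ^ 2 ∂μ
        ≤ ∫ ω, ((μ[lam t|ℋ t]) ω) ^ 2 * U t ω ^ 2 ∂μ := by
    intro t
    obtain ⟨g, hgm, hgeq⟩ := hU2 t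
    set w : Ω → ℝ := μ[lam t|ℋ t] with hwdef
    set w' : Ω → ℝ := μ[lam t|ℋ' t] with hw'def
    have hwℋ : StronglyMeasurable[ℋ t] w := stronglyMeasurable_condExp
    have hw'ℋ' : StronglyMeasurable[ℋ' t] w' := stronglyMeasurable_condExp
    have hw'ℋ : StronglyMeasurable[ℋ t] w' := hw'ℋ'.mono (hℋ'ℋ t)
    have hwb : ∀ᵐ ω ∂μ, |w ω| ≤ Cl := hwbd t
    have hw'b : ∀ᵐ ω ∂μ, |w' ω| ≤ Cl := hw'bd t
    have hU2m : StronglyMeasurable[m0] fun ω => U t ω ^ 2 := (hUmeas t).pow 2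
    have hU2bd : ∀ ω, |U t ω ^ 2| ≤ CU ^ 2 := fun ω => by
      rw [abs_pow]
      exact pow_le_pow_left₀ (abs_nonneg _) (hUbd t ω) 2
    have hU2int : Integrable (fun ω => U t ω ^ 2) μ :=
      hInt _ (CU ^ 2) hU2m.aestronglyMeasurable (Eventually.of_forall hU2bd)
    have hgbd : ∀ᵐ ω ∂μ, |g ω| ≤ CU ^ 2 := by
      have hcbd := ae_bdd_condExp_of_ae_bdd (μ := μ) (m := ℋ t)
        (R := ⟨CU ^ 2, by positivity⟩) (f := fun ω => U t ω ^ 2)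
        (Eventually.of_forall fun ω => by exact hU2bd ω)
      filter_upwards [hgeq, hcbd] with ω h1 h2
      rw [← h1]
      exact h2
    have hgm0 : AEStronglyMeasurable g μ := (hgm.mono (hℋ'm0 t)).aestronglyMeasurable
    -- claim A: for bounded ℋ t-measurable h, ∫ h U² = ∫ h g
    have claimA : ∀ (h : Ω → ℝ) (C : ℝ), StronglyMeasurable[ℋ t] h → (∀ᵐ ω ∂μ, |h ω| ≤ C) →
        ∫ ω, h ω * U t ω ^ 2 ∂μ = ∫ ω, h ω * g ω ∂μ := by
      intro h C hhm hhbd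
      have hhm0 : AEStronglyMeasurable h μ := (hhm.mono (hℋm0 t)).aestronglyMeasurable
      have hint1 : Integrable (h * fun ω => U t ω ^ 2) μ :=
        hInt (fun ω => h ω * U t ω ^ 2) (C * CU ^ 2)
          (hhm0.mul hU2m.aestronglyMeasurable) (hmulbd hhbd (Eventually.of_forall hU2bd))
      have e2 : μ[h * fun ω => U t ω ^ 2|ℋ t] =ᵐ[μ] fun ω => h ω * g ω := by
        refine (condExp_mul_of_stronglyMeasurable_left hhm hint1 hU2int).trans ?_
        filter_upwards [hgeq] with ω h1
        simp only [Pi.mul_apply]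
        rw [h1]
      have e0 := integral_condExp (μ := μ) (f := h * fun ω => U t ω ^ 2) (hℋm0 t)
      calc ∫ ω, h ω * U t ω ^ 2 ∂μ = ∫ x, (h * fun ω => U t ω ^ 2) x ∂μ := rfl
        _ = ∫ x, (μ[h * fun ω => U t ω ^ 2|ℋ t]) x ∂μ := e0.symm
        _ = ∫ ω, h ω * g ω ∂μ := integral_congr_ae e2
    -- claim B: for bounded ℋ' t-measurable k, ∫ k w = ∫ k w'
    have claimB : ∀ (k : Ω → ℝ) (C : ℝ), StronglyMeasurable[ℋ' t] k → (∀ᵐ ω ∂μ, |k ω| ≤ C) →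
        ∫ ω, k ω * w ω ∂μ = ∫ ω, k ω * w' ω ∂μ := by
      intro k C hkm hkbd
      have hkm0 : AEStronglyMeasurable k μ := (hkm.mono (hℋ'm0 t)).aestronglyMeasurable
      have hwint : Integrable w μ := integrable_condExp
      have hint1 : Integrable (k * w) μ :=
        hInt (fun ω => k ω * w ω) (C * Cl)
          (hkm0.mul ((hwℋ.mono (hℋm0 t)).aestronglyMeasurable)) (hmulbd hkbd hwb)
      have htower : μ[w|ℋ' t] =ᵐ[μ] w' := condExp_condExp_of_le (hℋ'ℋ t) (hℋm0 t)
      have e2 : μ[k * w|ℋ' t] =ᵐ[μ] fun ω => k ω * w' ω := by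
        refine (condExp_mul_of_stronglyMeasurable_left hkm hint1 hwint).trans ?_
        filter_upwards [htower] with ω h1
        simp only [Pi.mul_apply]
        rw [h1]
      have e0 := integral_condExp (μ := μ) (f := k * w) (hℋ'm0 t)
      calc ∫ ω, k ω * w ω ∂μ = ∫ x, (k * w) x ∂μ := rfl
        _ = ∫ x, (μ[k * w|ℋ' t]) x ∂μ := e0.symm
        _ = ∫ ω, k ω * w' ω ∂μ := integral_congr_ae e2
    -- measurability of squares
    have hw2ℋ : StronglyMeasurable[ℋ t] (fun ω => w ω ^ 2) := hwℋ.pow 2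
    have hw'2ℋ : StronglyMeasurable[ℋ t] (fun ω => w' ω ^ 2) := hw'ℋ.pow 2
    have hsqbd : ∀ {a : Ω → ℝ}, (∀ᵐ ω ∂μ, |a ω| ≤ Cl) → ∀ᵐ ω ∂μ, |a ω ^ 2| ≤ Cl ^ 2 := by
      intro a ha
      filter_upwards [ha] with ω h
      rw [abs_pow]
      exact pow_le_pow_left₀ (abs_nonneg _) h 2
    -- the key identity: ∫ w w' U² = ∫ w'² U²
    have e1 : ∫ ω, w ω ^ 2 * U t ω ^ 2 ∂μ = ∫ ω, w ω ^ 2 * g ω ∂μ :=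
      claimA _ (Cl ^ 2) hw2ℋ (hsqbd hwb)
    have e2 : ∫ ω, (w ω * w' ω) * U t ω ^ 2 ∂μ = ∫ ω, (w ω * w' ω) * g ω ∂μ :=
      claimA _ (Cl * Cl) (hwℋ.mul hw'ℋ) (hmulbd hwb hw'b)
    have e3 : ∫ ω, w' ω ^ 2 * U t ω ^ 2 ∂μ = ∫ ω, w' ω ^ 2 * g ω ∂μ :=
      claimA _ (Cl ^ 2) hw'2ℋ (hsqbd hw'b)
    have e4 : ∫ ω, (w' ω * g ω) * w ω ∂μ = ∫ ω, (w' ω * g ω) * w' ω ∂μ :=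
      claimB _ (Cl * CU ^ 2) (hw'ℋ'.mul hgm) (hmulbd hw'b hgbd)
    have key : ∫ ω, (w ω * w' ω) * U t ω ^ 2 ∂μ = ∫ ω, w' ω ^ 2 * U t ω ^ 2 ∂μ := by
      rw [e2, e3]
      calc ∫ ω, (w ω * w' ω) * g ω ∂μ = ∫ ω, (w' ω * g ω) * w ω ∂μ :=
            integral_congr_ae (Eventually.of_forall fun ω => by ring)
        _ = ∫ ω, (w' ω * g ω) * w' ω ∂μ := e4
        _ = ∫ ω, w' ω ^ 2 * g ω ∂μ :=
            integral_congr_ae (Eventually.of_forall fun ω => by ring)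
    -- integrabilities for the expansion
    have hwm0 : AEStronglyMeasurable w μ := (hwℋ.mono (hℋm0 t)).aestronglyMeasurable
    have hw'm0 : AEStronglyMeasurable w' μ := (hw'ℋ.mono (hℋm0 t)).aestronglyMeasurable
    have hiA : Integrable (fun ω => w ω ^ 2 * U t ω ^ 2) μ :=
      hInt _ (Cl ^ 2 * CU ^ 2) ((hwm0.pow 2).mul hU2m.aestronglyMeasurable)
        (hmulbd (hsqbd hwb) (Eventually.of_forall hU2bd))
    have hiB : Integrable (fun ω => w ω * w' ω * U t ω ^ 2) μ :=
      hInt _ (Cl * Cl * CU ^ 2) ((hwm0.mul hw'm0).mul hU2m.aestronglyMeasurable)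
        (hmulbd (hmulbd hwb hw'b) (Eventually.of_forall hU2bd))
    have hiC : Integrable (fun ω => w' ω ^ 2 * U t ω ^ 2) μ :=
      hInt _ (Cl ^ 2 * CU ^ 2) ((hw'm0.pow 2).mul hU2m.aestronglyMeasurable)
        (hmulbd (hsqbd hw'b) (Eventually.of_forall hU2bd))
    have hnn : 0 ≤ ∫ ω, (w ω - w' ω) ^ 2 * U t ω ^ 2 ∂μ :=
      integral_nonneg fun ω => mul_nonneg (sq_nonneg _) (sq_nonneg _)
    have hexpand : ∫ ω, (w ω - w' ω) ^ 2 * U t ω ^ 2 ∂μ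
        = ((∫ ω, w ω ^ 2 * U t ω ^ 2 ∂μ) - 2 * ∫ ω, w ω * w' ω * U t ω ^ 2 ∂μ)
          + ∫ ω, w' ω ^ 2 * U t ω ^ 2 ∂μ := by
      have h1 : ∀ ω, (w ω - w' ω) ^ 2 * U t ω ^ 2
          = (w ω ^ 2 * U t ω ^ 2 - 2 * (w ω * w' ω * U t ω ^ 2)) + w' ω ^ 2 * U t ω ^ 2 :=
        fun ω => by ring
      simp_rw [h1]
      have hiB2 : Integrable (fun ω => 2 * (w ω * w' ω * U t ω ^ 2)) μ := hiB.const_mul 2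
      have hiAB : Integrable
          (fun ω => w ω ^ 2 * U t ω ^ 2 - 2 * (w ω * w' ω * U t ω ^ 2)) μ := hiA.sub hiB2
      rw [integral_add hiAB hiC, integral_sub hiA hiB2, integral_const_mul]
    have key' : ∫ ω, (w ω * w' ω) * U t ω ^ 2 ∂μ = ∫ ω, w ω * w' ω * U t ω ^ 2 ∂μ := rfl
    rw [key'] at key
    linarith [hnn, key, hexpand]
  -- conclude
  simp only [var]
  rw [hmean (fun t => μ[lam t|ℋ' t]) hw'm hw'bd, hmean (fun t => μ[lam t|ℋ t]) hwm hwbd,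
    hsnd (fun t => μ[lam t|ℋ' t]) hw'm hw'bd, hsnd (fun t => μ[lam t|ℋ t]) hwm hwbd]
  have hsum : ∑ t, ∫ ω, ((μ[lam t|ℋ' t]) ω) ^ 2 * U t ω ^ 2 ∂μ
      ≤ ∑ t, ∫ ω, ((μ[lam t|ℋ t]) ω) ^ 2 * U t ω ^ 2 ∂μ :=
    Finset.sum_le_sum fun t _ => hterm t
  linarith [hsum]
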